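/- Let X ∼ P and Y ∼ Q be real random variables where Q is atomless with CDF F_Y, and let a ≠ 0 and b be real constants. Let F_{aY+b} denote the CDF of aY + b. Then the random variables min{F_{aY+b}(aX + b), 1 − F_{aY+b}(aX + b)} and min{F_Y(X), 1 − F_Y(X)} have the same distribution; i.e., the halfspace depth random variable HD(aX+b; Q̃), where Q̃ is the law of aY+b, is identically distributed to HD(X; Q). Consequently the halfspace-depth-induced divergence D̃^{HD}(P‖Q) = D(Q_P^{HD} ‖ U) is invariant under the common affine transformation x ↦ ax + b of both distributions, for any divergence D. -/

import Mathlib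

open MeasureTheory Set
open scoped ENNReal

/-- Let `X ~ P`, `Y ~ Q` with `Q` atomless with CDF `FY`, and let `a ≠ 0`, `b` be constants.
Let `G` be the CDF of `a Y + b` (the law `Q̃`). Then the halfspace depth random variable
`HD(aX+b; Q̃) = min (G (aX+b)) (1 - G (aX+b))` is identically distributed to
`HD(X; Q) = min (FY X) (1 - FY X)`. Consequently the halfspace-depth-induced divergence
`D̃^{HD}(P‖Q) = D(Q_P^{HD} ‖ U)` is invariant under the common affine transformation
`x ↦ a x + b` of both distributions, for any divergence `D`. -/
theorem hd_affine_invariance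
    (P Q : Measure ℝ) [IsProbabilityMeasure P] [IsProbabilityMeasure Q] [NullSingletonClass Q]
    (a b : ℝ) (ha : a ≠ 0)
    (FY G : ℝ → ℝ)
    (hFY : ∀ x, FY x = (Q (Iic x)).toReal)
    (hG : ∀ t, G t = ((Measure.map (fun y => a * y + b) Q) (Iic t)).toReal) :
    Measure.map (fun x => min (G (a * x + b)) (1 - G (a * x + b))) P =
      Measure.map (fun x => min (FY x) (1 - FY x)) P ∧
    ∀ D : Measure ℝ → Measure ℝ → ℝ,
      D (Measure.map (fun x => min (G (a * x + b)) (1 - G (a * x + b))) P)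
          ((2 : ℝ≥0∞) • volume.restrict (Icc (0 : ℝ) (1 / 2))) =
      D (Measure.map (fun x => min (FY x) (1 - FY x)) P)
          ((2 : ℝ≥0∞) • volume.restrict (Icc (0 : ℝ) (1 / 2))) := by
  have hmeas : Measurable fun y : ℝ => a * y + b :=
    (measurable_id.const_mul a).add_const b
  have key : ∀ x : ℝ, min (G (a * x + b)) (1 - G (a * x + b)) =
      min (FY x) (1 - FY x) := by
    intro x
    have hmap : (Measure.map (fun y => a * y + b) Q) (Iic (a * x + b)) =
        Q ((fun y => a * y + b) ⁻¹' Iic (a * x + b)) :=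
      Measure.map_apply hmeas measurableSet_Iic
    rcases lt_or_gt_of_ne ha with hneg | hpos
    · -- a < 0 : preimage is Ici x
      have hpre : (fun y => a * y + b) ⁻¹' Iic (a * x + b) = Ici x := by
        ext y
        simp only [mem_preimage, mem_Iic, mem_Ici]
        rw [add_le_add_iff_right, mul_le_mul_left_of_neg hneg]
      have hQle : Q (Iic x) ≤ 1 := prob_le_one
      have hQIci : Q (Ici x) = 1 - Q (Iic x) := by
        rw [← measure_congr (Ioi_ae_eq_Ici (μ := Q)), ← compl_Iic,
          measure_compl measurableSet_Iic (measure_ne_top Q _), measure_univ]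
      have hGval : G (a * x + b) = 1 - FY x := by
        rw [hG, hmap, hpre, hQIci, hFY,
          ENNReal.toReal_sub_of_le hQle ENNReal.one_ne_top]
        simp
      rw [hGval]
      have : (1 : ℝ) - (1 - FY x) = FY x := by ring
      rw [this, min_comm]
    · -- a > 0 : preimage is Iic x
      have hpre : (fun y => a * y + b) ⁻¹' Iic (a * x + b) = Iic x := by
        ext y
        simp only [mem_preimage, mem_Iic]
        rw [add_le_add_iff_right]
        exact mul_le_mul_iff_right₀ hpos
      rw [hG, hmap, hpre, ← hFY]
  have hfun : (fun x => min (G (a * x + b)) (1 - G (a * x + b))) =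
      fun x => min (FY x) (1 - FY x) := funext key
  refine ⟨by rw [hfun], fun D => by rw [hfun]⟩
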